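/- Let G be a locally compact group, K a compact subgroup, and π a unitary representation of G on a Hilbert space H. Suppose π admits a K-invariant vector v that is cyclic for π, and suppose dim H^K = 1. Then π is irreducible. -/

import Mathlib

/-- The closed subspace of `K`-fixed vectors of a unitary representation `π`. -/
def invariantVectors {G : Type*} [Group G] {H : Type*} [NormedAddCommGroup H]
    [InnerProductSpace ℂ H] [CompleteSpace H]
    (π : G →* unitary (H →L[ℂ] H)) (K : Subgroup G) : Submodule ℂ H where
  carrier := {v | ∀ k ∈ K, (π k : H →L[ℂ] H) v = v}
  add_mem' := by
    intro a b ha hb k hk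
    simp [map_add, ha k hk, hb k hk]
  zero_mem' := by
    intro k hk
    simp
  smul_mem' := by
    intro c v hv k hk
    simp [map_smul, hv k hk]

/-- if a (strongly continuous) unitary representation `π` of `G` admits a
cyclic `K`-invariant vector (`K` compact) and the space of `K`-fixed vectors is
one-dimensional, then `π` is irreducible. -/
theorem stmt6 {G : Type*} [Group G] [TopologicalSpace G] [IsTopologicalGroup G]
    (K : Subgroup G) (hK : IsCompact (K : Set G))
    {H : Type*} [NormedAddCommGroup H] [InnerProductSpace ℂ H] [CompleteSpace H]
    (π : G →* unitary (H →L[ℂ] H))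
    (hcont : ∀ v : H, Continuous fun g => (π g : H →L[ℂ] H) v)
    (v : H) (hv : v ∈ invariantVectors π K)
    (hcyc : (Submodule.span ℂ (Set.range fun g : G => (π g : H →L[ℂ] H) v)).topologicalClosure
      = ⊤)
    (hdim : Module.rank ℂ (invariantVectors π K) = 1) :
    ∀ V : Submodule ℂ H, IsClosed (V : Set H) →
      (∀ g : G, ∀ w ∈ V, (π g : H →L[ℂ] H) w ∈ V) → V = ⊥ ∨ V = ⊤ := by
  intro V hVclosed hVinv
  haveI : CompleteSpace V := hVclosed.completeSpace_coe
  -- the adjoint of π g is π g⁻¹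
  have hadj : ∀ g : G, ∀ x w : H,
      (inner ℂ x ((π g : H →L[ℂ] H) w) : ℂ) = inner ℂ ((π g⁻¹ : H →L[ℂ] H) x) w := by
    intro g x w
    have h1 : ContinuousLinearMap.adjoint (π g : H →L[ℂ] H) = (π g⁻¹ : H →L[ℂ] H) := by
      rw [← ContinuousLinearMap.star_eq_adjoint, map_inv]
      rfl
    rw [← ContinuousLinearMap.adjoint_inner_left, h1]
  -- Vᗮ is invariant
  have hVperp : ∀ g : G, ∀ w ∈ Vᗮ, (π g : H →L[ℂ] H) w ∈ Vᗮ := by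
    intro g w hw
    rw [Submodule.mem_orthogonal]
    intro x hx
    rw [hadj g x w]
    exact hw _ (hVinv g⁻¹ x hx)
  -- decompose v
  obtain ⟨v₁, hv₁V, v₂, hv₂V, hvsum⟩ := Submodule.exists_add_mem_mem_orthogonal (K := V) v
  -- V ⊓ Vᗮ = 0
  have hdisj : ∀ x : H, x ∈ V → x ∈ Vᗮ → x = 0 := by
    intro x hx hx'
    have : (inner ℂ x x : ℂ) = 0 := (Submodule.mem_orthogonal V x).mp hx' x hx
    exact inner_self_eq_zero.mp this
  -- v₁ and v₂ are K-fixed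
  have hv₁W : v₁ ∈ invariantVectors π K := by
    intro k hk
    have hvfix : (π k : H →L[ℂ] H) v = v := hv k hk
    have hsum : (π k : H →L[ℂ] H) v₁ + (π k : H →L[ℂ] H) v₂ = v₁ + v₂ := by
      rw [← map_add, ← hvsum, hvfix, hvsum]
    have hmem : (π k : H →L[ℂ] H) v₁ - v₁ ∈ V := V.sub_mem (hVinv k v₁ hv₁V) hv₁V
    have hmem' : (π k : H →L[ℂ] H) v₁ - v₁ ∈ Vᗮ := by
      have : (π k : H →L[ℂ] H) v₁ - v₁ = v₂ - (π k : H →L[ℂ] H) v₂ := by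
        have := hsum; abel_nf; linear_combination (norm := abel) hsum
      rw [this]
      exact Vᗮ.sub_mem hv₂V (hVperp k v₂ hv₂V)
    have := hdisj _ hmem hmem'
    rw [sub_eq_zero] at this
    exact this
  have hv₂W : v₂ ∈ invariantVectors π K := by
    intro k hk
    have h1 : (π k : H →L[ℂ] H) v₁ = v₁ := hv₁W k hk
    have hvfix : (π k : H →L[ℂ] H) v = v := hv k hk
    have hsum : v₁ + (π k : H →L[ℂ] H) v₂ = v₁ + v₂ :=
      calc v₁ + (π k : H →L[ℂ] H) v₂ = (π k : H →L[ℂ] H) v₁ + (π k : H →L[ℂ] H) v₂ := by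
            rw [h1]
        _ = (π k : H →L[ℂ] H) v := by rw [← map_add, ← hvsum]
        _ = v := hvfix
        _ = v₁ + v₂ := hvsum
    exact add_left_cancel hsum
  -- one-dimensionality: v₁ and v₂ are multiples of a common vector
  obtain ⟨u, hu⟩ := rank_le_one_iff.mp hdim.le
  obtain ⟨a, ha⟩ := hu ⟨v₁, hv₁W⟩
  obtain ⟨b, hb⟩ := hu ⟨v₂, hv₂W⟩
  have ha' : a • (u : H) = v₁ := congrArg Subtype.val ha
  have hb' : b • (u : H) = v₂ := congrArg Subtype.val hb
  -- orthogonality forces v₁ = 0 or v₂ = 0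
  have horth : (inner ℂ v₁ v₂ : ℂ) = 0 := (Submodule.mem_orthogonal V v₂).mp hv₂V v₁ hv₁V
  have hcases : v₁ = 0 ∨ v₂ = 0 := by
    rw [← ha', ← hb', inner_smul_left, inner_smul_right] at horth
    rcases mul_eq_zero.mp horth with h | h
    · left; rw [← ha', show a = 0 from by simpa using h, zero_smul]
    · rcases mul_eq_zero.mp h with h | h
      · right; rw [← hb', h, zero_smul]
      · left; rw [← ha', inner_self_eq_zero.mp h, smul_zero]
  -- helper: if v lies in a closed invariant subspace W, then W = ⊤
  have hspan : ∀ W : Submodule ℂ H, IsClosed (W : Set H) →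
      (∀ g : G, ∀ w ∈ W, (π g : H →L[ℂ] H) w ∈ W) → v ∈ W → W = ⊤ := by
    intro W hWc hWinv hvW
    have hle : Submodule.span ℂ (Set.range fun g : G => (π g : H →L[ℂ] H) v) ≤ W := by
      rw [Submodule.span_le]
      rintro _ ⟨g, rfl⟩
      exact hWinv g v hvW
    have := Submodule.topologicalClosure_minimal _ hle hWc
    rw [hcyc] at this
    exact top_unique this
  rcases hcases with h1 | h2
  · -- v ∈ Vᗮ, so Vᗮ = ⊤, so V = ⊥
    left
    have hvperp : v ∈ Vᗮ := by rw [hvsum, h1, zero_add]; exact hv₂V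
    have hVp : Vᗮ = ⊤ := hspan Vᗮ V.isClosed_orthogonal hVperp hvperp
    rw [eq_bot_iff]
    intro x hx
    have hx' : x ∈ Vᗮ := hVp ▸ Submodule.mem_top
    simpa using hdisj x hx hx'
  · -- v ∈ V, so V = ⊤
    right
    have hvV : v ∈ V := by rw [hvsum, h2, add_zero]; exact hv₁V
    exact hspan V hVclosed hVinv hvV
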